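/- Let G be a Roelcke precompact topological group with a basis of open subgroups at the identity, and let V ≤ G be an open subgroup. Then for every x ∈ G, the double coset VxV contains finitely many left cosets of V if and only if it contains finitely many right cosets of V. -/

import Mathlib

open Pointwise

/-- A topological group is Roelcke precompact if for every neighborhood `U` of the identity
there is a finite set `F` with `G = U F U`. -/
def RoelckePrecompact (G : Type*) [Group G] [TopologicalSpace G] : Prop :=
  ∀ U ∈ nhds (1 : G), ∃ F : Finset G, U * (F : Set G) * U = Set.univ

section Aux

variable {G : Type*} [Group G]

lemma myAA (V : Subgroup G) : (V : Set G) * V = V := coe_mul_coe V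

lemma smul_eq_singleton_mul (g : G) (s : Set G) : g • s = {g} * s := by
  rw [Set.singleton_mul]; rfl

/-- The double coset `V x V` as a set. -/
def dcs (V : Subgroup G) (x : G) : Set G := (V:Set G) * {x} * (V:Set G)

lemma dcs_mul_A (V : Subgroup G) (x : G) : dcs V x * V = dcs V x := by
  rw [dcs, mul_assoc, myAA]

lemma A_mul_dcs (V : Subgroup G) (x : G) : (V:Set G) * dcs V x = dcs V x := by
  rw [dcs, mul_assoc ((V:Set G)) ({x}) ((V:Set G)), ← mul_assoc ((V:Set G)) ((V:Set G)), myAA,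
    ← mul_assoc]

lemma pow_comm_A (V : Subgroup G) (x : G) (k : ℕ) :
    dcs V x ^ k * V = (V:Set G) * dcs V x ^ k := by
  cases k with
  | zero => simp
  | succ n =>
    rw [pow_succ, mul_assoc, dcs_mul_A, ← pow_succ]
    conv_rhs => rw [pow_succ' (dcs V x) n, ← mul_assoc, A_mul_dcs, ← pow_succ']

lemma A_pow_A (V : Subgroup G) (x : G) (k : ℕ) :
    (V:Set G) * dcs V x ^ k * V = (V:Set G) * dcs V x ^ k := by
  rw [mul_assoc, pow_comm_A, ← mul_assoc, myAA]

lemma piece_mul (V : Subgroup G) (x : G) (k m : ℕ) :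
    ((V:Set G) * dcs V x ^ k) * ((V:Set G) * dcs V x ^ m) = (V:Set G) * dcs V x ^ (k+m) := by
  rw [← mul_assoc, A_pow_A, mul_assoc, ← pow_add]

/-- The submonoid generated by `V` and `x` as a union of products. -/
def Tmon (V : Subgroup G) (x : G) : Set G := ⋃ k : ℕ, (V:Set G) * dcs V x ^ k

lemma A_sub_T (V : Subgroup G) (x : G) : (V:Set G) ⊆ Tmon V x := by
  intro a ha
  exact Set.mem_iUnion.2 ⟨0, by simpa using ha⟩

lemma x_mem_dcs (V : Subgroup G) (x : G) : x ∈ dcs V x := by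
  rw [dcs]
  exact ⟨x, ⟨1, V.one_mem, x, rfl, one_mul x⟩, 1, V.one_mem, mul_one x⟩

lemma x_mem_T (V : Subgroup G) (x : G) : x ∈ Tmon V x := by
  refine Set.mem_iUnion.2 ⟨1, ?_⟩
  rw [pow_one, A_mul_dcs]
  exact x_mem_dcs V x

lemma T_mul_T (V : Subgroup G) (x : G) : Tmon V x * Tmon V x ⊆ Tmon V x := by
  rintro z ⟨t, ht, s, hs, rfl⟩
  obtain ⟨k, hk⟩ := Set.mem_iUnion.1 ht
  obtain ⟨m, hm⟩ := Set.mem_iUnion.1 hs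
  refine Set.mem_iUnion.2 ⟨k + m, ?_⟩
  rw [← piece_mul]
  exact Set.mul_mem_mul hk hm

lemma absorb_piece (V : Subgroup G) (x t : G) (k : ℕ)
    (ht : t ∈ (V:Set G) * dcs V x ^ k) :
    (V:Set G) * {t} * (V:Set G) ⊆ (V:Set G) * dcs V x ^ k := by
  have h1 : ({t} : Set G) ⊆ (V:Set G) * dcs V x ^ k := Set.singleton_subset_iff.2 ht
  have h2 : (V:Set G) * {t} * (V:Set G) ⊆
      (V:Set G) * ((V:Set G) * dcs V x ^ k) * (V:Set G) :=
    Set.mul_subset_mul_right (Set.mul_subset_mul_left h1)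
  have h3 : (V:Set G) * ((V:Set G) * dcs V x ^ k) * (V:Set G)
      = (V:Set G) * dcs V x ^ k := by
    rw [← mul_assoc ((V:Set G)) ((V:Set G)) (dcs V x ^ k), myAA, A_pow_A]
  rwa [h3] at h2

/-- cosets finiteness criterion -/
lemma cosets_finite_iff (V : Subgroup G) (Y : Set G) :
    ((fun g : G => g • (V : Set G)) '' Y).Finite ↔
      ∃ S : Set G, S.Finite ∧ Y ⊆ S * V := by
  constructor
  · intro hF
    haveI := hF.to_subtype
    have h : ∀ C : ((fun g : G => g • (V : Set G)) '' Y),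
        ∃ g : G, (C : Set G) = g • (V : Set G) := by
      rintro ⟨C, g, hg, rfl⟩
      exact ⟨g, rfl⟩
    choose f hf using h
    refine ⟨Set.range f, Set.finite_range f, ?_⟩
    intro y hy
    have hmem : y • (V : Set G) ∈ (fun g : G => g • (V : Set G)) '' Y := ⟨y, hy, rfl⟩
    have hfC : y • (V : Set G) = f ⟨_, hmem⟩ • (V : Set G) := hf ⟨_, hmem⟩
    have hyy : y ∈ y • (V : Set G) := by
      refine ⟨1, V.one_mem, ?_⟩
      simp
    rw [hfC] at hyy
    rw [smul_eq_singleton_mul] at hyy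
    have hsub : ({f ⟨_, hmem⟩} : Set G) ⊆ Set.range f := Set.singleton_subset_iff.2 ⟨_, rfl⟩
    exact Set.mul_subset_mul_right hsub hyy
  · rintro ⟨S, hSfin, hY⟩
    refine ((hSfin.image (fun g : G => g • (V : Set G))).subset ?_)
    rintro _ ⟨g, hg, rfl⟩
    obtain ⟨s, hs, a, ha, rfl⟩ := hY hg
    refine ⟨s, hs, ?_⟩
    dsimp only
    rw [mul_smul, smul_coe_set ha]

lemma pieces_bounded (V : Subgroup G) (x : G) (S : Set G) (hSfin : S.Finite)
    (hS : dcs V x ⊆ S * V) (k : ℕ) :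
    ∃ Q : Set G, Q.Finite ∧ (V:Set G) * dcs V x ^ k ⊆ Q * V := by
  induction k with
  | zero =>
    refine ⟨{1}, Set.finite_singleton 1, ?_⟩
    rw [pow_zero, mul_one]
    intro a ha
    exact ⟨1, rfl, a, ha, one_mul a⟩
  | succ n ih =>
    obtain ⟨Q, hQfin, hQ⟩ := ih
    refine ⟨Q * S, hQfin.mul hSfin, ?_⟩
    calc (V:Set G) * dcs V x ^ (n+1) = ((V:Set G) * dcs V x ^ n) * dcs V x := by
          rw [pow_succ, mul_assoc]
      _ ⊆ (Q * V) * dcs V x := Set.mul_subset_mul_right hQ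
      _ = Q * dcs V x := by rw [mul_assoc, A_mul_dcs]
      _ ⊆ Q * (S * V) := Set.mul_subset_mul_left hS
      _ = Q * S * V := (mul_assoc _ _ _).symm

lemma left_finite_inv {G : Type*} [Group G] [TopologicalSpace G]
    (hG : RoelckePrecompact G) (V : Subgroup G) (hV : IsOpen (V:Set G)) (x : G)
    (h : ((fun g : G => g • (V : Set G)) '' ((V:Set G) * {x} * (V:Set G))).Finite) :
    ((fun g : G => g • (V : Set G)) '' ((V:Set G) * {x⁻¹} * (V:Set G))).Finite := by
  classical
  rw [cosets_finite_iff] at h ⊢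
  obtain ⟨S, hSfin, hS⟩ := h
  have hdcs : dcs V x ⊆ S * V := hS
  obtain ⟨F, hF⟩ := hG V (hV.mem_nhds V.one_mem)
  set T := Tmon V x with hTdef
  -- each double coset meeting T is contained in finitely many left cosets
  have hloc : ∀ f : G, (((V:Set G) * {f} * V) ∩ T).Nonempty →
      ∃ Q : Set G, Q.Finite ∧ (V:Set G) * {f} * V ⊆ Q * V := by
    rintro f ⟨t, htf, htT⟩
    obtain ⟨k, hk⟩ := Set.mem_iUnion.1 htT
    obtain ⟨w, hw, b, hb, hwb⟩ := htf
    obtain ⟨u, hu, f', rfl, huf⟩ := hw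
    have hwb' : w * b = t := hwb
    have huf' : u * f' = w := huf
    -- t = u * f' * b
    have hfmem : f' ∈ (V:Set G) * dcs V x ^ k := by
      have hfeq : f' = u⁻¹ * t * b⁻¹ := by
        rw [← hwb', ← huf']; group
      have : f' ∈ (V:Set G) * {t} * V := by
        refine ⟨u⁻¹ * t, ⟨u⁻¹, V.inv_mem hu, t, rfl, rfl⟩, b⁻¹, V.inv_mem hb, ?_⟩
        rw [hfeq]
      exact absorb_piece V x t k hk this
    obtain ⟨Q, hQfin, hQ⟩ := pieces_bounded V x S hSfin hdcs k
    exact ⟨Q, hQfin, (absorb_piece V x f' k hfmem).trans hQ⟩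
  -- T is covered by finitely many left cosets
  have hcover : ∃ R : Set G, R.Finite ∧ T ⊆ R * V := by
    set P := {f ∈ (F : Set G) | (((V:Set G) * {f} * V) ∩ T).Nonempty} with hPdef
    have hPfin : P.Finite := F.finite_toSet.subset (Set.sep_subset _ _)
    have hchoice : ∀ f : P, ∃ Q : Set G, Q.Finite ∧ (V:Set G) * {(f:G)} * V ⊆ Q * V :=
      fun f => hloc f f.2.2
    choose Q hQfin hQ using hchoice
    haveI := hPfin.to_subtype
    refine ⟨⋃ f : P, Q f, Set.finite_iUnion hQfin, ?_⟩
    intro t ht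
    have htuniv : t ∈ (V:Set G) * ↑F * V := by rw [hF]; trivial
    obtain ⟨w, hw, b, hb, hwb⟩ := htuniv
    obtain ⟨u, hu, f, hfF, huf⟩ := hw
    have htm : t ∈ (V:Set G) * {f} * V := by
      refine ⟨w, ⟨u, hu, f, rfl, huf⟩, b, hb, hwb⟩
    have hfP : f ∈ P := ⟨hfF, ⟨t, htm, ht⟩⟩
    have : t ∈ Q ⟨f, hfP⟩ * V := hQ ⟨f, hfP⟩ htm
    exact Set.mul_subset_mul_right (Set.subset_iUnion Q ⟨f, hfP⟩) this
  obtain ⟨R, hRfin, hTR⟩ := hcover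
  -- T is closed under inverses
  have hinv : ∀ t ∈ T, t⁻¹ ∈ T := by
    intro t ht
    have hIfin : ((fun g : G => g • (V:Set G)) '' T).Finite :=
      (cosets_finite_iff V T).2 ⟨R, hRfin, hTR⟩
    have hmaps : Set.MapsTo (fun C => t • C) ((fun g : G => g • (V:Set G)) '' T)
        ((fun g : G => g • (V:Set G)) '' T) := by
      rintro _ ⟨g, hg, rfl⟩
      refine ⟨t * g, T_mul_T V x (Set.mul_mem_mul ht hg), ?_⟩
      dsimp only
      rw [mul_smul]
    have hinj : Set.InjOn (fun C : Set G => t • C) ((fun g : G => g • (V:Set G)) '' T) :=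
      (MulAction.injective (β := Set G) t).injOn
    have hsurj := ((hIfin.injOn_iff_bijOn_of_mapsTo hmaps).1 hinj).surjOn
    have hAmem : (V:Set G) ∈ (fun g : G => g • (V:Set G)) '' T :=
      ⟨1, A_sub_T V x V.one_mem, one_smul _ _⟩
    obtain ⟨C, hC, hCt⟩ := hsurj hAmem
    obtain ⟨g, hg, rfl⟩ := hC
    have h1 : (t * g) • (V:Set G) = V := by
      rw [mul_smul]; exact hCt
    have h2 : t * g ∈ V := by
      have hmem2 : t * g ∈ (t * g) • (V:Set G) := by
        refine ⟨1, V.one_mem, ?_⟩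
        simp
      rwa [h1] at hmem2
    have h3 : t⁻¹ = g * (t * g)⁻¹ := by group
    rw [h3]
    exact T_mul_T V x (Set.mul_mem_mul hg (A_sub_T V x (V.inv_mem h2)))
  have hxinvT : x⁻¹ ∈ T := hinv x (x_mem_T V x)
  obtain ⟨k, hk⟩ := Set.mem_iUnion.1 hxinvT
  refine ⟨R, hRfin, ?_⟩
  intro y hy
  exact hTR (Set.mem_iUnion.2 ⟨k, absorb_piece V x x⁻¹ k hk hy⟩)

lemma right_eq (V : Subgroup G) (x : G) :
    (fun g : G => (V:Set G) * {g}) '' ((V:Set G) * {x} * V) =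
      (fun C : Set G => C⁻¹) '' ((fun g : G => g • (V:Set G)) '' ((V:Set G) * {x⁻¹} * V)) := by
  rw [Set.image_image]
  have h1 : ∀ g : G, (g • (V:Set G))⁻¹ = (V:Set G) * {g⁻¹} := by
    intro g
    rw [smul_eq_singleton_mul, mul_inv_rev, inv_coe_set, Set.inv_singleton]
  simp only [h1]
  rw [← Set.image_image (f := fun g : G => g⁻¹) (g := fun h : G => (V:Set G) * {h})]
  rw [Set.image_inv_eq_inv]
  rw [mul_inv_rev, mul_inv_rev, inv_coe_set, Set.inv_singleton, inv_inv, ← mul_assoc]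

end Aux

theorem doubleCoset_finite_left_iff_right {G : Type*} [Group G] [TopologicalSpace G]
    [IsTopologicalGroup G]
    (hbasis : ∀ U ∈ nhds (1 : G), ∃ W : Subgroup G, IsOpen (W : Set G) ∧ (W : Set G) ⊆ U)
    (hG : RoelckePrecompact G)
    (V : Subgroup G) (hV : IsOpen (V : Set G)) (x : G) :
    ((fun g : G => g • (V : Set G)) '' ((V : Set G) * {x} * (V : Set G))).Finite ↔
      ((fun g : G => (V : Set G) * {g}) '' ((V : Set G) * {x} * (V : Set G))).Finite := by
  constructor
  · intro h
    rw [right_eq V x]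
    exact (left_finite_inv hG V hV x h).image _
  · intro h
    rw [right_eq V x] at h
    have h2 := h.image (fun C : Set G => C⁻¹)
    rw [Set.image_image] at h2
    simp only [inv_inv, Set.image_id'] at h2
    have h3 := left_finite_inv hG V hV x⁻¹ h2
    rwa [inv_inv] at h3
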